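/- arXiv:2101.03522 — 3 statements merged into one kernel-verified Lean document; each statement's English description precedes it below -/
import Mathlib

section
/- Let a, b, c ∈ ℝ with c ≠ 0, and let X = a·E₁₃ + b·E₂₃ + c·(E₂₁ − E₁₂), where Eᵢⱼ denotes the 3×3 real matrix whose only nonzero entry is a 1 in row i and column j. Then for every s ∈ ℝ the matrix exponential satisfies exp(s·X) = M(x(s), y(s), c·s), where x(s) = (b/c)(cos(c·s) − 1) + (a/c) sin(c·s) and y(s) = (b/c) sin(c·s) + (a/c)(1 − cos(c·s)). -/
set_option maxHeartbeats 800000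

/-- The matrix `M(x, y, θ)` realizing the element `(x, y, θ)` of `SE(2)`. -/
noncomputable def M (x y θ : ℝ) : Matrix (Fin 3) (Fin 3) ℝ :=
  !![Real.cos θ, -Real.sin θ, x; Real.sin θ, Real.cos θ, y; 0, 0, 1]

/-- `E i j`: the 3×3 matrix whose unique nonzero entry is a 1 in row `i`, column `j`
(rows and columns indexed from 1 as `1, 2, 3` ↦ `0, 1, 2`). -/
def E (i j : Fin 3) : Matrix (Fin 3) (Fin 3) ℝ := Matrix.single i j 1

noncomputable def psiFun (p : ℂ × ℝ) : Matrix (Fin 3) (Fin 3) ℝ :=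
  !![p.1.re, -p.1.im, 0; p.1.im, p.1.re, 0; 0, 0, p.2]

noncomputable def psi : (ℂ × ℝ) →ₐ[ℝ] Matrix (Fin 3) (Fin 3) ℝ where
  toFun := psiFun
  map_one' := by
    ext i j
    fin_cases i <;> fin_cases j <;>
      simp [psiFun, Matrix.one_apply, Matrix.vecHead, Matrix.vecTail]
  map_mul' p q := by
    ext i j
    fin_cases i <;> fin_cases j <;>
      simp [psiFun, Matrix.mul_apply, Fin.sum_univ_three, Complex.mul_re, Complex.mul_im,
        Matrix.vecHead, Matrix.vecTail] <;> ring
  map_zero' := by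
    ext i j
    fin_cases i <;> fin_cases j <;> simp [psiFun, Matrix.vecHead, Matrix.vecTail]
  map_add' p q := by
    ext i j
    fin_cases i <;> fin_cases j <;> simp [psiFun, Matrix.vecHead, Matrix.vecTail] <;> ring
  commutes' r := by
    ext i j
    fin_cases i <;> fin_cases j <;>
      simp [psiFun, Matrix.algebraMap_matrix_apply, Prod.algebraMap_apply,
        Matrix.vecHead, Matrix.vecTail]

lemma psi_continuous : Continuous psi := by
  apply continuous_matrix
  intro i j
  fin_cases i <;> fin_cases j <;>
    simp [psi, psiFun, Matrix.vecHead, Matrix.vecTail] <;> fun_prop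

/-- One-parameter subgroups of SE(2), case `c ≠ 0`:
`exp(s X) = M(x(s), y(s), c s)` with
`x(s) = (b/c)(cos(cs) − 1) + (a/c) sin(cs)`, `y(s) = (b/c) sin(cs) + (a/c)(1 − cos(cs))`. -/
theorem exp_rotation (a b c : ℝ) (hc : c ≠ 0) (s : ℝ) :
    NormedSpace.exp (s • (a • E 0 2 + b • E 1 2 + c • (E 1 0 - E 0 1))) =
      M (b / c * (Real.cos (c * s) - 1) + a / c * Real.sin (c * s))
        (b / c * Real.sin (c * s) + a / c * (1 - Real.cos (c * s))) (c * s) := by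
  letI : SeminormedRing (Matrix (Fin 3) (Fin 3) ℝ) := Matrix.linftyOpSemiNormedRing
  letI : NormedRing (Matrix (Fin 3) (Fin 3) ℝ) := Matrix.linftyOpNormedRing
  letI : NormedAlgebra ℝ (Matrix (Fin 3) (Fin 3) ℝ) := Matrix.linftyOpNormedAlgebra
  set T : Matrix (Fin 3) (Fin 3) ℝ := !![1, 0, -b/c; 0, 1, a/c; 0, 0, 1] with hT
  set T' : Matrix (Fin 3) (Fin 3) ℝ := !![1, 0, b/c; 0, 1, -a/c; 0, 0, 1] with hT'
  have hTT' : T * T' = 1 := by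
    ext i j
    fin_cases i <;> fin_cases j <;>
      simp [hT, hT', Matrix.mul_apply, Fin.sum_univ_three, Matrix.one_apply,
        Matrix.vecHead, Matrix.vecTail] <;> ring
  have hT'T : T' * T = 1 := by
    ext i j
    fin_cases i <;> fin_cases j <;>
      simp [hT, hT', Matrix.mul_apply, Fin.sum_univ_three, Matrix.one_apply,
        Matrix.vecHead, Matrix.vecTail] <;> ring
  set U : (Matrix (Fin 3) (Fin 3) ℝ)ˣ := ⟨T, T', hTT', hT'T⟩ with hU
  have hX : s • (a • E 0 2 + b • E 1 2 + c • (E 1 0 - E 0 1)) =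
      (U : Matrix (Fin 3) (Fin 3) ℝ) * psi ((c * s) * Complex.I, (0:ℝ)) *
        ((U⁻¹ : (Matrix (Fin 3) (Fin 3) ℝ)ˣ) : Matrix (Fin 3) (Fin 3) ℝ) := by
    ext i j
    fin_cases i <;> fin_cases j <;>
      simp [hU, hT, hT', E, psi, psiFun, Matrix.mul_apply, Fin.sum_univ_three,
        Matrix.single, Matrix.smul_apply, Units.inv_mk,
        Matrix.vecHead, Matrix.vecTail] <;> (try field_simp) <;> (try ring)
  rw [hX, Matrix.exp_units_conj]
  have hmap : NormedSpace.exp (psi ((c * s) * Complex.I, (0:ℝ))) =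
      psi (NormedSpace.exp ((((c * s) : ℂ) * Complex.I, (0:ℝ)) : ℂ × ℝ)) :=
    (NormedSpace.map_exp psi psi_continuous _).symm
  have hexp : NormedSpace.exp ((((c * s) : ℂ) * Complex.I, (0:ℝ)) : ℂ × ℝ) =
      ((Complex.cos (c * s) + Complex.sin (c * s) * Complex.I), (1:ℝ)) := by
    ext
    · rw [show ∀ p : ℂ × ℝ, (NormedSpace.exp p).1 = NormedSpace.exp p.1 from
        fun p => NormedSpace.map_exp (RingHom.fst ℂ ℝ) continuous_fst p]
      rw [← Complex.exp_eq_exp_ℂ, Complex.exp_mul_I]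
    · rw [show ∀ p : ℂ × ℝ, (NormedSpace.exp p).2 = NormedSpace.exp p.2 from
        fun p => NormedSpace.map_exp (RingHom.snd ℂ ℝ) continuous_snd p]
      simp [NormedSpace.exp_zero]
  rw [hmap, hexp]
  clear hX hmap hexp
  ext i j
  fin_cases i <;> fin_cases j <;>
    simp [hU, hT, hT', M, psi, psiFun, Matrix.mul_apply, Fin.sum_univ_three,
      ← Complex.ofReal_mul, Complex.cos_ofReal_re, Complex.sin_ofReal_re,
      Complex.cos_ofReal_im, Complex.sin_ofReal_im, Units.inv_mk,
      Matrix.vecHead, Matrix.vecTail] <;> (try field_simp) <;> (try ring)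
end

section
/- Let a, b, c ∈ ℝ with c ≠ 0, let X = a·E₁₃ + b·E₂₃ + c·(E₂₁ − E₁₂), and let x₀, y₀, θ₀ ∈ ℝ. Then for every s ∈ ℝ, exp(s·X) · M(x₀, y₀, θ₀) = M( (x₀ + b/c) cos(c·s) + (a/c − y₀) sin(c·s) − b/c, (y₀ − a/c) cos(c·s) + (b/c + x₀) sin(c·s) + a/c, θ₀ + c·s ). -/
set_option maxHeartbeats 1000000


open NormedSpace Real

attribute [local instance] Matrix.linftyOpNormedRing Matrix.linftyOpNormedAlgebra

noncomputable section

abbrev Mat := Matrix (Fin 3) (Fin 3) ℝ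

def Jm : Mat := !![0,-1,0;1,0,0;0,0,0]
def Km : Mat := !![1,0,0;0,1,0;0,0,0]
def Lm : Mat := !![0,0,0;0,0,0;0,0,1]

def Rm (θ : ℝ) : Mat := Real.cos θ • Km + Real.sin θ • Jm + Lm

lemma exp_rot (c : ℝ) (t : ℝ) :
    NormedSpace.exp (t • (c • Jm)) = Rm (c * t) := by
  set A : Mat := c • Jm with hA
  have hR : ∀ u : ℝ, HasDerivAt (fun u => Rm (c * u))
      ((c * (-Real.sin (c * u))) • Km + (c * Real.cos (c * u)) • Jm) u := by
    intro u
    have h1 : HasDerivAt (fun u : ℝ => c * u) c u := by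
      simpa using (hasDerivAt_id u).const_mul c
    have hcos : HasDerivAt (fun u : ℝ => Real.cos (c * u)) (c * (-Real.sin (c * u))) u := by
      simpa [mul_comm, Function.comp_def] using (Real.hasDerivAt_cos (c * u)).comp u h1
    have hsin : HasDerivAt (fun u : ℝ => Real.sin (c * u)) (c * Real.cos (c * u)) u := by
      simpa [mul_comm, Function.comp_def] using (Real.hasDerivAt_sin (c * u)).comp u h1
    exact ((hcos.smul_const Km).add (hsin.smul_const Jm)).add_const Lm
  have key : ∀ u : ℝ, (-A) * Rm (c * u)
      + ((c * (-Real.sin (c * u))) • Km + (c * Real.cos (c * u)) • Jm) = 0 := by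
    intro u
    ext i j
    fin_cases i <;> fin_cases j <;>
      simp [Rm, Jm, Km, Lm, hA, Matrix.mul_apply, Fin.sum_univ_succ, Matrix.vecHead,
        Matrix.vecTail] <;> ring
  have hf : ∀ u : ℝ, HasDerivAt (fun u => NormedSpace.exp (u • (-A)) * Rm (c * u)) 0 u := by
    intro u
    have h1 := hasDerivAt_exp_smul_const (𝕂 := ℝ) (-A) u
    have := h1.mul (hR u)
    have h2 : NormedSpace.exp (u • (-A)) * (-A) * Rm (c * u)
        + NormedSpace.exp (u • (-A)) * ((c * (-Real.sin (c * u))) • Km + (c * Real.cos (c * u)) • Jm)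
        = 0 := by
      rw [mul_assoc, ← mul_add, key u, mul_zero]
    exact h2 ▸ this
  have hconst := is_const_of_deriv_eq_zero (𝕜 := ℝ)
    (f := fun u => NormedSpace.exp (u • (-A)) * Rm (c * u))
    (fun u => (hf u).differentiableAt) (fun u => (hf u).deriv)
  have h0 : NormedSpace.exp ((0:ℝ) • (-A)) * Rm (c * 0) = 1 := by
    rw [zero_smul, NormedSpace.exp_zero, one_mul]
    ext i j
    fin_cases i <;> fin_cases j <;>
      simp [Rm, Jm, Km, Lm, Matrix.vecHead, Matrix.vecTail, Matrix.one_apply]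
  have hft : NormedSpace.exp (t • (-A)) * Rm (c * t) = 1 := (hconst t 0).trans h0
  have hinv : NormedSpace.exp (t • A) * NormedSpace.exp (t • (-A)) = 1 := by
    rw [smul_neg]
    rw [← Matrix.exp_add_of_commute (t • A) (-(t • A)) (Commute.neg_right (Commute.refl _))]
    simp
  calc NormedSpace.exp (t • A) = NormedSpace.exp (t • A) * (NormedSpace.exp (t • (-A)) * Rm (c * t)) := by
        rw [hft, mul_one]
    _ = (NormedSpace.exp (t • A) * NormedSpace.exp (t • (-A))) * Rm (c * t) := by rw [mul_assoc]
    _ = Rm (c * t) := by rw [hinv, one_mul]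

end

/-- Orbit of the one-parameter subgroup generated by
`X = a E₁₃ + b E₂₃ + c (E₂₁ − E₁₂)` (case `c ≠ 0`) through the point `(x₀, y₀, θ₀)`. -/
theorem orbit_rotation (a b c : ℝ) (hc : c ≠ 0) (x₀ y₀ θ₀ : ℝ) (s : ℝ) :
    NormedSpace.exp (s • (a • E 0 2 + b • E 1 2 + c • (E 1 0 - E 0 1))) * M x₀ y₀ θ₀ =
      M ((x₀ + b / c) * Real.cos (c * s) + (a / c - y₀) * Real.sin (c * s) - b / c)
        ((y₀ - a / c) * Real.cos (c * s) + (b / c + x₀) * Real.sin (c * s) + a / c)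
        (θ₀ + c * s) := by
  set T : Mat := !![1,0,-b/c;0,1,a/c;0,0,1] with hT
  set Ti : Mat := !![1,0,b/c;0,1,-a/c;0,0,1] with hTi
  have hTTi : T * Ti = 1 := by
    ext i j
    fin_cases i <;> fin_cases j <;>
      simp [hT, hTi, Matrix.mul_apply, Fin.sum_univ_succ, Matrix.vecHead, Matrix.vecTail,
        Matrix.one_apply] <;> ring
  have hTinv : T⁻¹ = Ti := Matrix.inv_eq_right_inv hTTi
  have hU : IsUnit T := by
    have hdet : T.det = 1 := by
      simp [hT, Matrix.det_fin_three, Matrix.vecHead, Matrix.vecTail]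
    rw [Matrix.isUnit_iff_isUnit_det, hdet]; exact isUnit_one
  have hE : a • E 0 2 + b • E 1 2 + c • (E 1 0 - E 0 1) = !![0,-c,a;c,0,b;0,0,0] := by
    ext i j
    fin_cases i <;> fin_cases j <;>
      simp [E, Matrix.single, Matrix.vecHead, Matrix.vecTail]
  have hX : s • (a • E 0 2 + b • E 1 2 + c • (E 1 0 - E 0 1)) = T * (s • (c • Jm)) * T⁻¹ := by
    rw [hE, hTinv]
    ext i j
    fin_cases i <;> fin_cases j <;>
      simp [hT, hTi, Jm, Matrix.mul_apply, Fin.sum_univ_succ,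
        Matrix.vecHead, Matrix.vecTail] <;> first | ring1 | (field_simp <;> ring1)
  rw [hX, Matrix.exp_conj T _ hU, exp_rot, hTinv]
  ext i j
  fin_cases i <;> fin_cases j <;>
    simp [hT, hTi, M, Rm, Jm, Km, Lm, Matrix.mul_apply, Fin.sum_univ_succ,
      Matrix.vecHead, Matrix.vecTail, Real.cos_add, Real.sin_add] <;> first | ring1 | (field_simp <;> ring1)
end

section
/- Let a, b, c, x₀, y₀, θ₀ ∈ ℝ, let X = a·E₁₃ + b·E₂₃ + c·(E₂₁ − E₁₂), and let p : ℝ → ℝ² assign to s the pair of entries ((exp(s·X) · M(x₀,y₀,θ₀))₁₃, (exp(s·X) · M(x₀,y₀,θ₀))₂₃) (the (x,y)-projection of the orbit). Then exactly one of the following alternatives holds: (i) p is constant; (ii) there exists a nonzero vector v ∈ ℝ² with Set.range p = (x₀, y₀) +ᵥ (ℝ ∙ v) (a straight line); (iii) there exist a center q ∈ ℝ² and a radius r > 0 with Set.range p equal to the Euclidean circle {z ∈ ℝ² : dist(z, q) = r}. -/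
open Pointwise

/-- The point `(x, y)` of the Euclidean plane `ℝ²`. -/
noncomputable def pt (x y : ℝ) : EuclideanSpace ℝ (Fin 2) :=
  (WithLp.equiv 2 (Fin 2 → ℝ)).symm ![x, y]

/-! ### Auxiliary lemmas -/

section Aux

open NormedSpace

/-- Closed form for the exponential of a multiple of a 3×3 matrix `X` with `X³ = -c² X`,
via uniqueness of solutions of the matrix ODE. -/
lemma exp_matrix_eq (X : Matrix (Fin 3) (Fin 3) ℝ) (c : ℝ) (hX : X * X * X = -(c^2) • X)
    (α β : ℝ → ℝ) (hα0 : α 0 = 0) (hβ0 : β 0 = 0)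
    (hα : ∀ s, HasDerivAt α (1 - c^2 * β s) s) (hβ : ∀ s, HasDerivAt β (α s) s) (s : ℝ) :
    exp (s • X) = 1 + α s • X + β s • (X * X) := by
  letI : SeminormedRing (Matrix (Fin 3) (Fin 3) ℝ) := Matrix.linftyOpSemiNormedRing
  letI : NormedRing (Matrix (Fin 3) (Fin 3) ℝ) := Matrix.linftyOpNormedRing
  letI : NormedAlgebra ℝ (Matrix (Fin 3) (Fin 3) ℝ) := Matrix.linftyOpNormedAlgebra
  set G : ℝ → Matrix (Fin 3) (Fin 3) ℝ := fun u => 1 + α u • X + β u • (X * X) with hG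
  have hXG : ∀ t, X * G t = (1 - c^2 * β t) • X + α t • (X * X) := by
    intro t
    simp only [hG, mul_add, mul_one, mul_smul_comm, sub_smul, one_smul]
    rw [show X * (X * X) = X * X * X by noncomm_ring, hX]
    module
  have hGd : ∀ t, HasDerivAt G (X * G t) t := by
    intro t
    have h1 : HasDerivAt (fun u => α u • X) ((1 - c^2 * β t) • X) t := (hα t).smul_const X
    have h2 : HasDerivAt (fun u => β u • (X * X)) (α t • (X * X)) t := (hβ t).smul_const _
    have h := ((hasDerivAt_const t (1 : Matrix (Fin 3) (Fin 3) ℝ)).add h1).add h2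
    rw [hXG t]
    convert h using 1
    rfl
    rfl
    rfl
    rfl
    abel
  set K : ℝ → Matrix (Fin 3) (Fin 3) ℝ := fun u => exp (u • (-X)) * G u with hK
  have hKd : ∀ t, HasDerivAt K 0 t := by
    intro t
    have he : HasDerivAt (fun u : ℝ => exp (u • (-X))) (exp (t • (-X)) * (-X)) t :=
      hasDerivAt_exp_smul_const (-X) t
    have := he.mul (hGd t)
    convert this using 1
    rfl
    rfl
    rfl
    rfl
    rw [mul_assoc, neg_mul, mul_neg, neg_add_cancel]
  have hconst : ∀ t, K t = K 0 := fun t =>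
    is_const_of_deriv_eq_zero (fun u => (hKd u).differentiableAt)
      (fun u => (hKd u).deriv) t 0
  have hK0 : K 0 = 1 := by
    simp [hK, hG, hα0, hβ0]
  have h1 : exp (s • X) * exp (s • (-X)) = 1 := by
    rw [← Matrix.exp_add_of_commute]
    · simp
    · simp [Commute, SemiconjBy]
  have := hconst s
  rw [hK0, hK] at this
  have this2 : exp (s • -X) * G s = 1 := this
  calc exp (s • X) = exp (s • X) * 1 := by rw [mul_one]
    _ = exp (s • X) * (exp (s • (-X)) * G s) := by rw [this2]
    _ = (exp (s • X) * exp (s • (-X))) * G s := by rw [mul_assoc]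
    _ = G s := by rw [h1, one_mul]

lemma pt_apply0 (x y : ℝ) : pt x y 0 = x := rfl
lemma pt_apply1 (x y : ℝ) : pt x y 1 = y := rfl
lemma pt_eta (z : EuclideanSpace ℝ (Fin 2)) : pt (z 0) (z 1) = z := by
  ext i; fin_cases i <;> rfl
lemma pt_add (x y u v : ℝ) : pt x y + pt u v = pt (x+u) (y+v) := by
  ext i; fin_cases i <;> rfl
lemma pt_sub (x y u v : ℝ) : pt x y - pt u v = pt (x-u) (y-v) := by
  ext i; fin_cases i <;> rfl
lemma pt_smul (t x y : ℝ) : t • pt x y = pt (t*x) (t*y) := by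
  ext i; fin_cases i <;> rfl
lemma pt_inj {x y u v : ℝ} (h : pt x y = pt u v) : x = u ∧ y = v :=
  ⟨congrArg (fun z => z 0) h, congrArg (fun z => z 1) h⟩
lemma norm_pt (x y : ℝ) : ‖pt x y‖ = Real.sqrt (x^2 + y^2) := by
  rw [EuclideanSpace.norm_eq]
  simp [Fin.sum_univ_two, pt_apply0, pt_apply1, sq_abs]
lemma pt_zero : pt 0 0 = 0 := by ext i; fin_cases i <;> rfl
lemma pt_congr {x y u v : ℝ} (h1 : x = u) (h2 : y = v) : pt x y = pt u v := by rw [h1, h2]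

local notation "E2" => EuclideanSpace ℝ (Fin 2)

lemma mem_line (z v : E2) (t : ℝ) :
    z + t • v ∈ z +ᵥ ((ℝ ∙ v : Submodule ℝ E2) : Set E2) :=
  ⟨t • v, Submodule.mem_span_singleton.2 ⟨t, rfl⟩, rfl⟩

lemma line_eq_range (z v : E2) :
    z +ᵥ ((ℝ ∙ v : Submodule ℝ E2) : Set E2) = Set.range (fun t : ℝ => z + t • v) := by
  ext x
  constructor
  · rintro ⟨w, hw, rfl⟩
    obtain ⟨t, rfl⟩ := Submodule.mem_span_singleton.1 hw
    exact ⟨t, rfl⟩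
  · rintro ⟨t, rfl⟩
    exact mem_line z v t

lemma const_ne_line (z₀ z v : E2) (hv : v ≠ 0) :
    ({z₀} : Set E2) ≠ z +ᵥ ((ℝ ∙ v : Submodule ℝ E2) : Set E2) := by
  intro h
  have h0 : z + (0:ℝ) • v ∈ ({z₀} : Set E2) := h ▸ mem_line z v 0
  have h1 : z + (1:ℝ) • v ∈ ({z₀} : Set E2) := h ▸ mem_line z v 1
  simp only [Set.mem_singleton_iff, zero_smul, one_smul, add_zero] at h0 h1
  apply hv
  have : z = z + v := h0.trans h1.symm
  have := left_eq_add.mp this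
  exact this

lemma const_ne_sphere (z₀ q : E2) (r : ℝ) (hr : 0 < r) :
    ({z₀} : Set E2) ≠ Metric.sphere q r := by
  intro h
  have h0 : q + pt r 0 ∈ Metric.sphere q r := by
    rw [mem_sphere_iff_norm, add_sub_cancel_left, norm_pt]
    simp [Real.sqrt_sq hr.le]
  have h1 : q - pt r 0 ∈ Metric.sphere q r := by
    rw [mem_sphere_iff_norm, sub_sub_cancel_left, norm_neg, norm_pt]
    simp [Real.sqrt_sq hr.le]
  rw [← h] at h0 h1
  simp only [Set.mem_singleton_iff] at h0 h1
  have : q + pt r 0 = q - pt r 0 := h0.trans h1.symm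
  have h2 : pt r 0 = - pt r 0 := by
    have h4 : q + pt r 0 = q + -pt r 0 := by rw [this, sub_eq_add_neg]
    exact add_left_cancel h4
  have h3 : r = -r := (pt_inj (by rw [h2]; ext i; fin_cases i <;> rfl)).1
  linarith

lemma line_ne_sphere (z v q : E2) (hv : v ≠ 0) (r : ℝ) :
    z +ᵥ ((ℝ ∙ v : Submodule ℝ E2) : Set E2) ≠ Metric.sphere q r := by
  intro h
  have hmem : ∀ t : ℝ, ‖z + t • v - q‖ = r := by
    intro t
    have := h ▸ mem_line z v t
    rwa [mem_sphere_iff_norm] at this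
  have hb : ∀ t : ℝ, |t| * ‖v‖ ≤ r + ‖z - q‖ := by
    intro t
    have : ‖t • v‖ = ‖(z + t • v - q) - (z - q)‖ := by congr 1; abel
    calc |t| * ‖v‖ = ‖t • v‖ := by rw [norm_smul, Real.norm_eq_abs]
      _ ≤ ‖z + t • v - q‖ + ‖z - q‖ := by rw [this]; exact norm_sub_le _ _
      _ = r + ‖z - q‖ := by rw [hmem t]
  have hv' : 0 < ‖v‖ := norm_pos_iff.2 hv
  have hr0 : 0 ≤ r := by have := hmem 0; rw [← this]; positivity
  set T : ℝ := (r + ‖z - q‖ + 1) / ‖v‖ with hT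
  have hTpos : 0 < T := by positivity
  have := hb T
  rw [abs_of_pos hTpos, hT, div_mul_cancel₀ _ hv'.ne'] at this
  linarith

lemma exists_rot (w1 w2 z1 z2 : ℝ) (h : z1^2 + z2^2 = w1^2 + w2^2)
    (hw : ¬(w1 = 0 ∧ w2 = 0)) :
    ∃ φ : ℝ, Real.cos φ * w1 - Real.sin φ * w2 = z1 ∧
      Real.sin φ * w1 + Real.cos φ * w2 = z2 := by
  set v : ℂ := ⟨w1, w2⟩ with hv
  set u : ℂ := ⟨z1, z2⟩ with hu
  have hv0 : v ≠ 0 := by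
    intro h0
    exact hw ⟨congrArg Complex.re h0, congrArg Complex.im h0⟩
  have habs : ‖u‖ = ‖v‖ := by
    rw [Complex.norm_def, Complex.norm_def]
    congr 1
    simp [Complex.normSq_apply, hu, hv]
    nlinarith [h]
  set d : ℂ := u / v with hd
  have habsd : ‖d‖ = 1 := by
    rw [hd, norm_div, habs, div_self]
    exact norm_ne_zero_iff.2 hv0
  have hd0 : d ≠ 0 := by
    intro h0; rw [h0] at habsd; simp at habsd
  have hre : d.re = Real.cos d.arg := by
    rw [Complex.cos_arg hd0, habsd, div_one]
  have him : d.im = Real.sin d.arg := by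
    rw [Complex.sin_arg, habsd, div_one]
  have hud : u = d * v := by rw [hd, div_mul_cancel₀ _ hv0]
  refine ⟨d.arg, ?_, ?_⟩
  · have := congrArg Complex.re hud
    rw [Complex.mul_re] at this
    rw [← hre, ← him]
    simpa [hu, hv] using this.symm
  · have := congrArg Complex.im hud
    rw [Complex.mul_im] at this
    rw [← hre, ← him]
    simp only [hu, hv] at this
    rw [this]
    ring

lemma X_explicit (a b c : ℝ) : a • E 0 2 + b • E 1 2 + c • (E 1 0 - E 0 1)
    = !![0,-c,a;c,0,b;0,0,0] := by
  ext i j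
  fin_cases i <;> fin_cases j
  all_goals simp [E, Matrix.single, Matrix.vecHead, Matrix.vecTail]

lemma X_cube (a b c : ℝ) : (!![0,-c,a;c,0,b;0,0,0] : Matrix (Fin 3) (Fin 3) ℝ) *
    !![0,-c,a;c,0,b;0,0,0] * !![0,-c,a;c,0,b;0,0,0] = -(c^2) • !![0,-c,a;c,0,b;0,0,0] := by
  ext i j
  fin_cases i <;> fin_cases j
  all_goals simp [Matrix.mul_apply, Fin.sum_univ_three, Matrix.vecHead, Matrix.vecTail]
  all_goals try ring
  all_goals exact Or.inl (by norm_num)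

lemma entry02 (al be a b c x₀ y₀ θ₀ : ℝ) :
    ((1 + al • (!![0,-c,a;c,0,b;0,0,0] : Matrix (Fin 3) (Fin 3) ℝ)
        + be • (!![0,-c,a;c,0,b;0,0,0] * !![0,-c,a;c,0,b;0,0,0])) * M x₀ y₀ θ₀) 0 2
      = (1 - be*c^2) * x₀ - (al*c) * y₀ + (al * a - be * (c*b)) := by
  simp [M, Matrix.mul_apply, Fin.sum_univ_three, Matrix.one_apply, Matrix.vecHead,
    Matrix.vecTail]
  first
  | ring1
  | exact Or.inl (by ring)

lemma entry12 (al be a b c x₀ y₀ θ₀ : ℝ) :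
    ((1 + al • (!![0,-c,a;c,0,b;0,0,0] : Matrix (Fin 3) (Fin 3) ℝ)
        + be • (!![0,-c,a;c,0,b;0,0,0] * !![0,-c,a;c,0,b;0,0,0])) * M x₀ y₀ θ₀) 1 2
      = (al*c) * x₀ + (1 - be*c^2) * y₀ + (al * b + be * (c*a)) := by
  simp [M, Matrix.mul_apply, Fin.sum_univ_three, Matrix.one_apply, Matrix.vecHead,
    Matrix.vecTail]
  first
  | ring1
  | exact Or.inl (by ring)

end Aux

/-- Trichotomy for projections onto the `(x,y)`-plane of orbits of one-parameter
subgroups of SE(2): exactly one of the following holds — the projection is a point,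
a straight line, or a Euclidean circle of positive radius. -/
theorem orbit_projection_trichotomy (a b c x₀ y₀ θ₀ : ℝ)
    (p : ℝ → EuclideanSpace ℝ (Fin 2))
    (hp : ∀ s : ℝ, p s =
      pt ((NormedSpace.exp (s • (a • E 0 2 + b • E 1 2 + c • (E 1 0 - E 0 1))) *
            M x₀ y₀ θ₀) 0 2)
         ((NormedSpace.exp (s • (a • E 0 2 + b • E 1 2 + c • (E 1 0 - E 0 1))) *
            M x₀ y₀ θ₀) 1 2)) :
    ((∀ s : ℝ, p s = p 0) ∧
      ¬(∃ v : EuclideanSpace ℝ (Fin 2), v ≠ 0 ∧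
          Set.range p = pt x₀ y₀ +ᵥ ((ℝ ∙ v : Submodule ℝ (EuclideanSpace ℝ (Fin 2))) :
            Set (EuclideanSpace ℝ (Fin 2)))) ∧
      ¬(∃ (q : EuclideanSpace ℝ (Fin 2)) (r : ℝ), 0 < r ∧
          Set.range p = Metric.sphere q r)) ∨
    (¬(∀ s : ℝ, p s = p 0) ∧
      (∃ v : EuclideanSpace ℝ (Fin 2), v ≠ 0 ∧
          Set.range p = pt x₀ y₀ +ᵥ ((ℝ ∙ v : Submodule ℝ (EuclideanSpace ℝ (Fin 2))) :
            Set (EuclideanSpace ℝ (Fin 2)))) ∧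
      ¬(∃ (q : EuclideanSpace ℝ (Fin 2)) (r : ℝ), 0 < r ∧
          Set.range p = Metric.sphere q r)) ∨
    (¬(∀ s : ℝ, p s = p 0) ∧
      ¬(∃ v : EuclideanSpace ℝ (Fin 2), v ≠ 0 ∧
          Set.range p = pt x₀ y₀ +ᵥ ((ℝ ∙ v : Submodule ℝ (EuclideanSpace ℝ (Fin 2))) :
            Set (EuclideanSpace ℝ (Fin 2)))) ∧
      (∃ (q : EuclideanSpace ℝ (Fin 2)) (r : ℝ), 0 < r ∧
          Set.range p = Metric.sphere q r)) := by
  have hXe : a • E 0 2 + b • E 1 2 + c • (E 1 0 - E 0 1) = !![0,-c,a;c,0,b;0,0,0] :=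
    X_explicit a b c
  have hX3 := X_cube a b c
  -- the key closed-form formula for `p`
  have key : ∀ (α β : ℝ → ℝ), α 0 = 0 → β 0 = 0 →
      (∀ s, HasDerivAt α (1 - c^2 * β s) s) → (∀ s, HasDerivAt β (α s) s) →
      ∀ s, p s = pt ((1 - β s*c^2) * x₀ - (α s*c) * y₀ + (α s * a - β s * (c*b)))
                    ((α s*c) * x₀ + (1 - β s*c^2) * y₀ + (α s * b + β s * (c*a))) := by
    intro α β h0 h1 hα hβ s
    rw [hp s, hXe, exp_matrix_eq _ c hX3 α β h0 h1 hα hβ s, entry02, entry12]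
  by_cases hc : c = 0
  · -- no rotation: point or line
    subst hc
    have hps : ∀ s, p s = pt x₀ y₀ + s • pt a b := by
      intro s
      have hα : ∀ s : ℝ, HasDerivAt (fun u : ℝ => u) (1 - (0:ℝ)^2 * (s^2/2)) s := by
        intro s
        simpa using hasDerivAt_id' s
      have hβ : ∀ s : ℝ, HasDerivAt (fun u : ℝ => u^2/2) ((fun u : ℝ => u) s) s := by
        intro s
        have := (hasDerivAt_pow 2 s).div_const 2
        simpa using this
      have := key (fun u => u) (fun u => u^2/2) rfl (by norm_num) hα hβ s
      rw [this, pt_smul, pt_add]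
      exact pt_congr (by ring) (by ring)
    by_cases hab : a = 0 ∧ b = 0
    · -- point
      obtain ⟨ha, hb⟩ := hab
      subst ha; subst hb
      have hconst : ∀ s, p s = pt x₀ y₀ := by
        intro s
        rw [hps s, pt_smul]
        simp [pt_zero]
      have hrange : Set.range p = {pt x₀ y₀} := by
        apply Set.eq_singleton_iff_unique_mem.2
        exact ⟨⟨0, hconst 0⟩, by rintro z ⟨s, rfl⟩; exact hconst s⟩
      refine Or.inl ⟨fun s => (hconst s).trans (hconst 0).symm, ?_, ?_⟩
      · rintro ⟨v, hv, heq⟩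
        exact const_ne_line (pt x₀ y₀) (pt x₀ y₀) v hv (hrange ▸ heq)
      · rintro ⟨q, r, hr, heq⟩
        exact const_ne_sphere (pt x₀ y₀) q r hr (hrange ▸ heq)
    · -- line
      have hv : pt a b ≠ 0 := by
        intro h0
        exact hab (pt_inj (h0.trans pt_zero.symm))
      have hrange : Set.range p =
          pt x₀ y₀ +ᵥ ((ℝ ∙ pt a b : Submodule ℝ (EuclideanSpace ℝ (Fin 2))) :
            Set (EuclideanSpace ℝ (Fin 2))) := by
        rw [line_eq_range]
        exact congrArg Set.range (funext hps)
      refine Or.inr (Or.inl ⟨?_, ⟨pt a b, hv, hrange⟩, ?_⟩)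
      · intro hconst
        apply hv
        have h1 := (hconst 1).symm.trans (hps 1)
        rw [hps 0] at h1
        have : pt x₀ y₀ + (0:ℝ) • pt a b = pt x₀ y₀ + (1:ℝ) • pt a b := h1
        simpa using (add_left_cancel this).symm
      · rintro ⟨q, r, hr, heq⟩
        exact line_ne_sphere (pt x₀ y₀) (pt a b) q hv r ((hrange.symm.trans heq))
  · -- rotation: point or circle
    set w1 : ℝ := x₀ + b/c with hw1
    set w2 : ℝ := y₀ - a/c with hw2
    set q : EuclideanSpace ℝ (Fin 2) := pt (-b/c) (a/c) with hq
    have hps : ∀ s, p s = q + pt (Real.cos (s*c) * w1 - Real.sin (s*c) * w2)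
        (Real.sin (s*c) * w1 + Real.cos (s*c) * w2) := by
      intro s
      have hα0 : Real.sin (0*c)/c = 0 := by simp
      have hβ0 : (1 - Real.cos (0*c))/c^2 = 0 := by simp
      have hα : ∀ s : ℝ, HasDerivAt (fun u : ℝ => Real.sin (u*c)/c)
          (1 - c^2 * ((1 - Real.cos (s*c))/c^2)) s := by
        intro s
        have h := (((hasDerivAt_id s).mul_const c).sin).div_const c
        convert h using 1
        rfl
        rfl
        rfl
        field_simp
        simp
      have hβ : ∀ s : ℝ, HasDerivAt (fun u : ℝ => (1 - Real.cos (u*c))/c^2)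
          ((fun u : ℝ => Real.sin (u*c)/c) s) s := by
        intro s
        have h := (((hasDerivAt_const s (1:ℝ)).sub
          ((hasDerivAt_id s).mul_const c).cos)).div_const (c^2)
        convert h using 1
        rfl
        rfl
        rfl
        field_simp
        simp only [id, mul_comm c s]
        ring
      have := key (fun u => Real.sin (u*c)/c) (fun u => (1 - Real.cos (u*c))/c^2)
        hα0 hβ0 hα hβ s
      rw [this, pt_add]
      refine pt_congr ?_ ?_
      · rw [hw1, hw2]; field_simp; ring
      · rw [hw1, hw2]; field_simp; ring
    by_cases hw : w1 = 0 ∧ w2 = 0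
    · -- point
      have hconst : ∀ s, p s = q := by
        intro s
        rw [hps s, hw.1, hw.2]
        simp [pt_zero]
      have hrange : Set.range p = {q} := by
        apply Set.eq_singleton_iff_unique_mem.2
        exact ⟨⟨0, hconst 0⟩, by rintro z ⟨s, rfl⟩; exact hconst s⟩
      refine Or.inl ⟨fun s => (hconst s).trans (hconst 0).symm, ?_, ?_⟩
      · rintro ⟨v, hv, heq⟩
        exact const_ne_line q (pt x₀ y₀) v hv (hrange ▸ heq)
      · rintro ⟨q', r, hr, heq⟩
        exact const_ne_sphere q q' r hr (hrange ▸ heq)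
    · -- circle
      have hpos : 0 < w1^2 + w2^2 := by
        rcases not_and_or.1 hw with h | h
        · have h1 : 0 < w1^2 := (sq_nonneg w1).lt_of_ne (Ne.symm (pow_ne_zero 2 h))
          nlinarith [sq_nonneg w2]
        · have h1 : 0 < w2^2 := (sq_nonneg w2).lt_of_ne (Ne.symm (pow_ne_zero 2 h))
          nlinarith [sq_nonneg w1]
      set r : ℝ := Real.sqrt (w1^2 + w2^2) with hrdef
      have hr : 0 < r := Real.sqrt_pos.2 hpos
      have hmem : ∀ s, p s ∈ Metric.sphere q r := by
        intro s
        rw [mem_sphere_iff_norm, hps s, add_sub_cancel_left, norm_pt, hrdef]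
        congr 1
        nlinarith [Real.sin_sq_add_cos_sq (s*c)]
      have hrange : Set.range p = Metric.sphere q r := by
        apply Set.eq_of_subset_of_subset
        · rintro z ⟨s, rfl⟩; exact hmem s
        · intro z hz
          rw [mem_sphere_iff_norm] at hz
          set z1 : ℝ := (z - q) 0 with hz1
          set z2 : ℝ := (z - q) 1 with hz2
          have hzq : pt z1 z2 = z - q := pt_eta (z - q)
          have hnorm : Real.sqrt (z1^2 + z2^2) = Real.sqrt (w1^2 + w2^2) := by
            rw [← norm_pt, hzq, hz, hrdef]
          have hsq : z1^2 + z2^2 = w1^2 + w2^2 := by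
            have h1 := congrArg (fun t => t^2) hnorm
            simpa [Real.sq_sqrt, (by positivity : (0:ℝ) ≤ z1^2 + z2^2),
              (by positivity : (0:ℝ) ≤ w1^2 + w2^2)] using h1
          obtain ⟨φ, hφ1, hφ2⟩ := exists_rot w1 w2 z1 z2 hsq hw
          refine ⟨φ/c, ?_⟩
          rw [hps (φ/c), div_mul_cancel₀ φ hc, hφ1, hφ2, hzq]
          abel
      refine Or.inr (Or.inr ⟨?_, ?_, q, r, hr, hrange⟩)
      · intro hconst
        have h0 : p 0 = q + pt w1 w2 := by
          rw [hps 0]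
          congr 1
          exact pt_congr (by simp) (by simp)
        have h1 : p (Real.pi/c) = q + pt (-w1) (-w2) := by
          rw [hps (Real.pi/c), div_mul_cancel₀ Real.pi hc]
          congr 1
          exact pt_congr (by simp) (by simp)
        have := (hconst (Real.pi/c)).trans h0
        rw [h1] at this
        have h2 := add_left_cancel this
        have h3 := pt_inj h2
        rcases not_and_or.1 hw with h | h
        · exact h (by linarith [h3.1])
        · exact h (by linarith [h3.2])
      · rintro ⟨v, hv, heq⟩
        exact line_ne_sphere (pt x₀ y₀) v q hv r (heq.symm.trans hrange)
end
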